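/- For every real α > 0, the function A ↦ -(det A)^(-α/2) is concave on the set of symmetric positive definite 2×2 real matrices; equivalently, A ↦ (det A)^(-α/2) is convex on this set. -/

import Mathlib

open Matrix Set Real

lemma speedAux_diagPos {A : Matrix (Fin 2) (Fin 2) ℝ} (hA : A.PosDef) (i : Fin 2) : 0 < A i i := by
  have h := hA.dotProduct_mulVec_pos (x := Pi.single i 1) (by simp [Function.ne_iff])
  simpa [dotProduct, mulVec, Fin.sum_univ_two, Pi.single_apply] using h

lemma speedAux_smulPosDef {A : Matrix (Fin 2) (Fin 2) ℝ} (hA : A.PosDef) {c : ℝ} (hc : 0 < c) :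
    (c • A).PosDef := by
  refine Matrix.PosDef.of_dotProduct_mulVec_pos ?_ (fun x hx => ?_)
  · show (c • A)ᴴ = c • A
    rw [conjTranspose_smul, hA.1]; norm_num
  · rw [smul_mulVec, dotProduct_smul, smul_eq_mul]
    exact mul_pos hc (hA.dotProduct_mulVec_pos hx)

lemma speedAux_convexOn_rpow_neg (α : ℝ) (hα : 0 < α) :
    ConvexOn ℝ (Ioi 0) fun x : ℝ => x ^ (-α) := by
  refine convexOn_of_hasDerivWithinAt2_nonneg (convex_Ioi 0)
    (f' := fun x => (-α) * x ^ (-α - 1)) (f'' := fun x => (-α) * ((-α - 1) * x ^ (-α - 2)))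
    ?_ ?_ ?_ ?_
  · intro x hx
    exact (Real.continuousAt_rpow_const x (-α) (Or.inl (ne_of_gt hx))).continuousWithinAt
  · intro x hx
    rw [interior_Ioi] at hx
    exact ((Real.hasDerivAt_rpow_const (Or.inl (ne_of_gt hx))).hasDerivWithinAt)
  · intro x hx
    rw [interior_Ioi] at hx
    have := ((Real.hasDerivAt_rpow_const (p := -α - 1) (Or.inl (ne_of_gt hx))).const_mul (-α))
    convert this.hasDerivWithinAt using 1
    · rfl
    · rfl
    · ring_nf
  · intro x hx
    rw [interior_Ioi] at hx
    have h2 : (0:ℝ) ≤ x ^ (-α - 2) := Real.rpow_nonneg (le_of_lt hx) _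
    nlinarith [mul_nonneg hα.le h2, mul_nonneg (mul_nonneg hα.le hα.le) h2]

lemma speedAux_detIneq {A B : Matrix (Fin 2) (Fin 2) ℝ} (hAs : A.IsSymm) (hBs : B.IsSymm)
    (hA : A.PosDef) (hB : B.PosDef) {t s : ℝ} (ht : 0 ≤ t) (hs : 0 ≤ s) :
    (t * Real.sqrt A.det + s * Real.sqrt B.det) ^ 2 ≤ (t • A + s • B).det := by
  have ha1 : 0 < A 0 0 := speedAux_diagPos hA 0
  have hd1 : 0 < A 1 1 := speedAux_diagPos hA 1
  have ha2 : 0 < B 0 0 := speedAux_diagPos hB 0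
  have hd2 : 0 < B 1 1 := speedAux_diagPos hB 1
  have hA10 : A 1 0 = A 0 1 := by
    have := congrFun (congrFun hAs 0) 1; simpa [Matrix.transpose_apply] using this
  have hB10 : B 1 0 = B 0 1 := by
    have := congrFun (congrFun hBs 0) 1; simpa [Matrix.transpose_apply] using this
  have hdA : 0 < A.det := hA.det_pos
  have hdB : 0 < B.det := hB.det_pos
  have hp2 : Real.sqrt A.det ^ 2 = A 0 0 * A 1 1 - A 0 1 ^ 2 := by
    rw [Real.sq_sqrt hdA.le, Matrix.det_fin_two, hA10]; ring
  have hq2 : Real.sqrt B.det ^ 2 = B 0 0 * B 1 1 - B 0 1 ^ 2 := by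
    rw [Real.sq_sqrt hdB.le, Matrix.det_fin_two, hB10]; ring
  have hp : 0 ≤ Real.sqrt A.det := Real.sqrt_nonneg _
  have hq : 0 ≤ Real.sqrt B.det := Real.sqrt_nonneg _
  rw [Matrix.det_fin_two (t • A + s • B)]
  simp only [Matrix.add_apply, Matrix.smul_apply, smul_eq_mul, hA10, hB10]
  set p := Real.sqrt A.det
  set q := Real.sqrt B.det
  have hid : A 0 0 * B 0 0 *
      ((A 0 0 * B 1 1 + B 0 0 * A 1 1 - 2 * (A 0 1 * B 0 1)) - 2 * (p * q)) =
      (A 0 0 * q - B 0 0 * p) ^ 2 + (A 0 0 * B 0 1 - B 0 0 * A 0 1) ^ 2 := by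
    linear_combination (-(A 0 0) ^ 2) * hq2 + (-(B 0 0) ^ 2) * hp2
  have h1 : 0 ≤ (A 0 0 * q - B 0 0 * p) ^ 2 + (A 0 0 * B 0 1 - B 0 0 * A 0 1) ^ 2 := by positivity
  have h2 : 0 < A 0 0 * B 0 0 := mul_pos ha1 ha2
  have key : 0 ≤ (A 0 0 * B 1 1 + B 0 0 * A 1 1 - 2 * (A 0 1 * B 0 1)) - 2 * (p * q) :=
    (mul_nonneg_iff_of_pos_left h2).mp (hid ▸ h1)
  have key2 : 0 ≤ t * s *
      ((A 0 0 * B 1 1 + B 0 0 * A 1 1 - 2 * (A 0 1 * B 0 1)) - 2 * (p * q)) :=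
    mul_nonneg (mul_nonneg ht hs) key
  nlinarith [key2, hp2, hq2, sq_nonneg t, sq_nonneg s]

/-- For every real `α > 0`, the function `A ↦ -(det A)^(-α/2)` is concave on the
set of symmetric positive definite `2×2` real matrices. -/
theorem speed_concave_on_posDef (α : ℝ) (hα : 0 < α) :
    ConcaveOn ℝ {A : Matrix (Fin 2) (Fin 2) ℝ | A.IsSymm ∧ A.PosDef}
      (fun A => -(A.det ^ (-(α / 2)) : ℝ)) := by
  constructor
  · -- convexity of the set
    intro A hA B hB a b ha hb hab
    refine ⟨?_, ?_⟩
    · show (a • A + b • B)ᵀ = a • A + b • B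
      rw [Matrix.transpose_add, Matrix.transpose_smul, Matrix.transpose_smul, hA.1, hB.1]
    · rcases ha.eq_or_lt with rfl | ha'
      · have hb1 : b = 1 := by linarith
        subst hb1
        simpa using hB.2
      · rcases hb.eq_or_lt with rfl | hb'
        · have ha1 : a = 1 := by linarith
          subst ha1
          simpa using hA.2
        · exact (speedAux_smulPosDef hA.2 ha').add (speedAux_smulPosDef hB.2 hb')
  · intro A hA B hB a b ha hb hab
    simp only [smul_eq_mul, mul_neg]
    rw [← neg_add, neg_le_neg_iff]
    set p := Real.sqrt A.det with hpdef
    set q := Real.sqrt B.det with hqdef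
    have hdA : 0 < A.det := hA.2.det_pos
    have hdB : 0 < B.det := hB.2.det_pos
    have hp : 0 < p := Real.sqrt_pos.mpr hdA
    have hq : 0 < q := Real.sqrt_pos.mpr hdB
    have hc : 0 < a * p + b * q := by
      rcases ha.eq_or_lt with rfl | ha'
      · have hb1 : b = 1 := by linarith
        simp [hb1, hq]
      · have : 0 ≤ b * q := mul_nonneg hb hq.le
        nlinarith [mul_pos ha' hp]
    have hdet : (a * p + b * q) ^ 2 ≤ (a • A + b • B).det :=
      speedAux_detIneq hA.1 hB.1 hA.2 hB.2 ha hb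
    have step1 : ((a • A + b • B).det) ^ (-(α / 2)) ≤ ((a * p + b * q) ^ 2) ^ (-(α / 2)) :=
      Real.rpow_le_rpow_of_nonpos (by positivity) hdet (by linarith)
    have step2 : ((a * p + b * q) ^ 2) ^ (-(α / 2)) = (a * p + b * q) ^ (-α) := by
      rw [← Real.rpow_natCast (a * p + b * q) 2, ← Real.rpow_mul hc.le]
      norm_num
      congr 1; ring
    have step3 : (a * p + b * q) ^ (-α) ≤ a * p ^ (-α) + b * q ^ (-α) := by
      have := (speedAux_convexOn_rpow_neg α hα).2 (mem_Ioi.mpr hp) (mem_Ioi.mpr hq) ha hb hab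
      simpa [smul_eq_mul] using this
    have hpe : p ^ (-α) = A.det ^ (-(α / 2)) := by
      rw [hpdef, Real.sqrt_eq_rpow, ← Real.rpow_mul hdA.le]
      norm_num
      congr 1; ring
    have hqe : q ^ (-α) = B.det ^ (-(α / 2)) := by
      rw [hqdef, Real.sqrt_eq_rpow, ← Real.rpow_mul hdB.le]
      norm_num
      congr 1; ring
    calc ((a • A + b • B).det) ^ (-(α / 2)) ≤ (a * p + b * q) ^ (-α) := by
            rw [← step2]; exact step1
      _ ≤ a * p ^ (-α) + b * q ^ (-α) := step3
      _ = a * A.det ^ (-(α / 2)) + b * B.det ^ (-(α / 2)) := by rw [hpe, hqe]
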